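/- For every T ≥ 1 and c_ψ > 0 there exists a constant C̄ depending only on T and c_ψ with the following property: for every integer j ≥ 1, every function ψ : ℝ → ℝ with |ψ(x)| ≤ c_ψ (1+|x|)^{−2} for all x, every finite set m of integers with m ⊆ {0, 1, …, ⌈T 2^{j−1}⌉ − 1}, and every x ∈ ℝ, (1 + x²) | Σ_{k∈m} ψ(2^j x − k) | ≤ C̄. -/

import Mathlib

open Real

lemma lemA0 (N : ℕ) : ∑ d ∈ Finset.range N, 1/(1+(d:ℝ))^2 ≤ 2 - 2/((N:ℝ)+1) := by
  induction N with
  | zero => simp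
  | succ n ih =>
    rw [Finset.sum_range_succ]
    have h1 : (0:ℝ) < (n:ℝ)+1 := by positivity
    have h2 : (0:ℝ) < (n:ℝ)+2 := by positivity
    have key : (1:ℝ)/(1+(n:ℝ))^2 ≤ 2/((n:ℝ)+1) - 2/((n:ℝ)+2) := by
      rw [div_sub_div _ _ (ne_of_gt h1) (ne_of_gt h2), div_le_div_iff₀ (by positivity) (by positivity)]
      nlinarith
    have hc : ((n+1 : ℕ) : ℝ) + 1 = (n:ℝ) + 2 := by push_cast; ring
    rw [hc]
    linarith

lemma lemA (s : Finset ℕ) : ∑ d ∈ s, 1/(1+(d:ℝ))^2 ≤ 2 := by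
  obtain ⟨N, hN⟩ := s.exists_nat_subset_range
  have h1 : ∑ d ∈ s, 1/(1+(d:ℝ))^2 ≤ ∑ d ∈ Finset.range N, 1/(1+(d:ℝ))^2 := by
    apply Finset.sum_le_sum_of_subset_of_nonneg hN
    intro i _ _; positivity
  have h2 := lemA0 N
  have h3 : (0:ℝ) ≤ 2/((N:ℝ)+1) := by positivity
  linarith

lemma lemB (y : ℝ) (m : Finset ℕ) : ∑ k ∈ m, 1/(1+|y - (k:ℝ)|)^2 ≤ 4 := by
  classical
  set n : ℤ := ⌊y⌋ with hn
  rw [← Finset.sum_filter_add_sum_filter_not m (fun k : ℕ => (k:ℤ) ≤ n)]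
  have h1 : ∑ k ∈ m.filter (fun k : ℕ => (k:ℤ) ≤ n), 1/(1+|y - (k:ℝ)|)^2 ≤ 2 := by
    set t := m.filter (fun k : ℕ => (k:ℤ) ≤ n) with ht
    have hb : ∀ k ∈ t, 1/(1+|y-(k:ℝ)|)^2 ≤ 1/(1+(((n - (k:ℤ)).toNat : ℕ) : ℝ))^2 := by
      intro k hk
      have hkn : (k:ℤ) ≤ n := (Finset.mem_filter.mp hk).2
      have hny : (n:ℝ) ≤ y := Int.floor_le y
      have hky : (k:ℝ) ≤ y := le_trans (by exact_mod_cast hkn) hny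
      have htn : (((n - (k:ℤ)).toNat : ℕ) : ℝ) = (n:ℝ) - (k:ℝ) := by
        have h1x := Int.toNat_of_nonneg (show (0:ℤ) ≤ n - (k:ℤ) by omega)
        exact_mod_cast congrArg (fun z : ℤ => (z:ℝ)) h1x
      have hd : (((n - (k:ℤ)).toNat : ℕ) : ℝ) ≤ |y - (k:ℝ)| := by
        rw [abs_of_nonneg (by linarith), htn]; linarith
      gcongr
    calc ∑ k ∈ t, 1/(1+|y - (k:ℝ)|)^2
        ≤ ∑ k ∈ t, 1/(1+(((n - (k:ℤ)).toNat : ℕ):ℝ))^2 := Finset.sum_le_sum hb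
      _ = ∑ d ∈ t.image (fun k : ℕ => (n - (k:ℤ)).toNat), 1/(1+(d:ℝ))^2 := by
          rw [Finset.sum_image]
          intro k1 hk1 k2 hk2 h
          have h1' : (k1:ℤ) ≤ n := (Finset.mem_filter.mp hk1).2
          have h2' : (k2:ℤ) ≤ n := (Finset.mem_filter.mp hk2).2
          dsimp only at h; omega
      _ ≤ 2 := lemA _
  have h2 : ∑ k ∈ m.filter (fun k : ℕ => ¬((k:ℤ) ≤ n)), 1/(1+|y - (k:ℝ)|)^2 ≤ 2 := by
    set t := m.filter (fun k : ℕ => ¬((k:ℤ) ≤ n)) with ht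
    have hb : ∀ k ∈ t, 1/(1+|y-(k:ℝ)|)^2 ≤ 1/(1+((((k:ℤ) - n - 1).toNat : ℕ) : ℝ))^2 := by
      intro k hk
      have hkn : n < (k:ℤ) := by
        have := (Finset.mem_filter.mp hk).2; omega
      have hyn : y < (n:ℝ) + 1 := Int.lt_floor_add_one y
      have hky : y < (k:ℝ) := by
        have : (n:ℝ) + 1 ≤ (k:ℝ) := by exact_mod_cast hkn
        linarith
      have htn : ((((k:ℤ) - n - 1).toNat : ℕ) : ℝ) = (k:ℝ) - (n:ℝ) - 1 := by
        have h1x := Int.toNat_of_nonneg (show (0:ℤ) ≤ (k:ℤ) - n - 1 by omega)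
        exact_mod_cast congrArg (fun z : ℤ => (z:ℝ)) h1x
      have hd : ((((k:ℤ) - n - 1).toNat : ℕ) : ℝ) ≤ |y - (k:ℝ)| := by
        rw [abs_of_nonpos (by linarith), htn]; linarith
      gcongr
    calc ∑ k ∈ t, 1/(1+|y - (k:ℝ)|)^2
        ≤ ∑ k ∈ t, 1/(1+((((k:ℤ) - n - 1).toNat : ℕ):ℝ))^2 := Finset.sum_le_sum hb
      _ = ∑ d ∈ t.image (fun k : ℕ => ((k:ℤ) - n - 1).toNat), 1/(1+(d:ℝ))^2 := by
          rw [Finset.sum_image]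
          intro k1 hk1 k2 hk2 h
          have h1' : n < (k1:ℤ) := by have := (Finset.mem_filter.mp hk1).2; omega
          have h2' : n < (k2:ℤ) := by have := (Finset.mem_filter.mp hk2).2; omega
          dsimp only at h; omega
      _ ≤ 2 := lemA _
  linarith

/-- For every `T ≥ 1` and `c_ψ > 0` there is a constant `C̄` depending only on `T` and
`c_ψ` such that for every `j ≥ 1`, every `ψ` with `|ψ(x)| ≤ c_ψ (1+|x|)⁻²`, every finite
`m ⊆ {0, …, ⌈T 2^{j−1}⌉ − 1}` and every `x ∈ ℝ`,
`(1 + x²) |Σ_{k∈m} ψ(2^j x − k)| ≤ C̄`. -/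
theorem stmt_16 (T cψ : ℝ) (hT : 1 ≤ T) (hcψ : 0 < cψ) :
    ∃ Cbar : ℝ,
      ∀ j : ℕ, 1 ≤ j →
        ∀ ψ : ℝ → ℝ, (∀ x : ℝ, |ψ x| ≤ cψ / (1 + |x|) ^ 2) →
          ∀ m : Finset ℕ, m ⊆ Finset.range ⌈T * 2 ^ (j - 1)⌉₊ →
            ∀ x : ℝ, (1 + x ^ 2) * |∑ k ∈ m, ψ (2 ^ j * x - (k : ℝ))| ≤ Cbar := by

  classical
  refine ⟨cψ * (4*(1+4*T^2) + 2*(T+1)), ?_⟩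
  intro j hj ψ hψ m hm x
  set P : ℝ := 2^(j-1) with hPdef
  have hP0 : (0:ℝ) < P := by positivity
  have hP1 : (1:ℝ) ≤ P := one_le_pow₀ (by norm_num)
  have h2j : (2:ℝ)^j = P * 2 := by
    have hj1 : j - 1 + 1 = j := by omega
    rw [hPdef, ← pow_succ, hj1]
  have habs0 : |∑ k ∈ m, ψ (2^j * x - (k:ℝ))| ≤ ∑ k ∈ m, |ψ (2^j*x - (k:ℝ))| :=
    Finset.abs_sum_le_sum_abs _ _
  by_cases hx : |x| ≤ 2*T
  · -- small x
    have hS : ∑ k ∈ m, |ψ (2^j*x - (k:ℝ))| ≤ cψ * 4 := by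
      calc ∑ k ∈ m, |ψ (2^j*x-(k:ℝ))|
          ≤ ∑ k ∈ m, cψ * (1/(1+|2^j*x - (k:ℝ)|)^2) := by
            apply Finset.sum_le_sum; intro k hk
            rw [mul_one_div]; exact hψ _
        _ = cψ * ∑ k ∈ m, 1/(1+|2^j*x - (k:ℝ)|)^2 := (Finset.mul_sum _ _ _).symm
        _ ≤ cψ * 4 := mul_le_mul_of_nonneg_left (lemB (2^j*x) m) hcψ.le
    have hx2 : x^2 ≤ 4*T^2 := by nlinarith [abs_nonneg x, sq_abs x]
    have habs' : |∑ k ∈ m, ψ (2^j * x - (k:ℝ))| ≤ cψ * 4 := le_trans habs0 hS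
    calc (1+x^2) * |∑ k ∈ m, ψ (2^j * x - (k:ℝ))|
        ≤ (1+4*T^2) * (cψ*4) :=
          mul_le_mul (by linarith) habs' (abs_nonneg _) (by nlinarith)
      _ ≤ cψ*(4*(1+4*T^2)+2*(T+1)) := by nlinarith
  · -- large x
    push_neg at hx
    have hx2 : (2:ℝ) ≤ |x| := by linarith
    have hxx : (4:ℝ) ≤ x^2 := by nlinarith [sq_abs x]
    have hterm : ∀ k ∈ m, |ψ (2^j*x - (k:ℝ))| ≤ cψ / (P * x^2) := by
      intro k hk
      have hkb : (k:ℝ) < T * P := by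
        have hkr := hm hk
        rw [Finset.mem_range] at hkr
        exact_mod_cast Nat.lt_ceil.mp hkr
      have hk0 : (0:ℝ) ≤ (k:ℝ) := Nat.cast_nonneg k
      have hlow : P * |x| ≤ |2^j * x - (k:ℝ)| := by
        rcases le_or_gt x 0 with hx0 | hx0
        · have hneg : 2^j * x - (k:ℝ) ≤ 0 := by rw [h2j]; nlinarith
          rw [abs_of_nonpos hneg, abs_of_nonpos hx0, h2j]
          nlinarith
        · have habsx : |x| = x := abs_of_pos hx0
          have hpos : 0 ≤ 2^j * x - (k:ℝ) := by
            rw [h2j]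
            nlinarith [hx.trans_eq habsx]
          rw [abs_of_nonneg hpos, habsx, h2j]
          nlinarith [hx.trans_eq habsx]
      have hsq : P * x^2 ≤ (1+|2^j*x - (k:ℝ)|)^2 := by
        have h1 : (0:ℝ) ≤ |2^j*x-(k:ℝ)| := abs_nonneg _
        have h2 : (0:ℝ) ≤ P*|x| := by positivity
        nlinarith [sq_abs x, abs_nonneg x, mul_le_mul hlow hlow h2 h1, mul_nonneg (mul_nonneg (sub_nonneg.mpr hP1) hP0.le) (sq_nonneg x)]
      calc |ψ (2^j*x-(k:ℝ))| ≤ cψ/(1+|2^j*x-(k:ℝ)|)^2 := hψ _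
        _ ≤ cψ/(P*x^2) := by
            apply div_le_div_of_nonneg_left hcψ.le (by positivity) hsq
    have hS : ∑ k ∈ m, |ψ (2^j*x-(k:ℝ))| ≤ (m.card : ℝ) * (cψ/(P*x^2)) := by
      calc ∑ k ∈ m, |ψ (2^j*x-(k:ℝ))| ≤ ∑ _k ∈ m, cψ/(P*x^2) := Finset.sum_le_sum hterm
        _ = (m.card : ℝ) * (cψ/(P*x^2)) := by rw [Finset.sum_const, nsmul_eq_mul]
    have hcard : (m.card : ℝ) ≤ (T+1)*P := by
      have h1 : m.card ≤ ⌈T*P⌉₊ := by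
        have := Finset.card_le_card hm
        simpa using this
      have h2 : (⌈T*P⌉₊ : ℝ) < T*P + 1 := Nat.ceil_lt_add_one (by positivity)
      have h3 : (m.card : ℝ) ≤ (⌈T*P⌉₊:ℝ) := by exact_mod_cast h1
      nlinarith
    have hfin : |∑ k ∈ m, ψ (2^j * x - (k:ℝ))| ≤ (T+1)*cψ/x^2 := by
      have hSx : ∑ k ∈ m, |ψ (2^j*x-(k:ℝ))| ≤ (T+1)*P * (cψ/(P*x^2)) :=
        le_trans hS (mul_le_mul_of_nonneg_right hcard (by positivity))
      have heq : (T+1)*P*(cψ/(P*x^2)) = (T+1)*cψ/x^2 := by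
        field_simp
      rw [heq] at hSx
      exact le_trans habs0 hSx
    have hA : |∑ k ∈ m, ψ (2^j * x - (k:ℝ))| * x^2 ≤ (T+1)*cψ := by
      have hx2pos : (0:ℝ) < x^2 := by linarith
      calc |∑ k ∈ m, ψ (2^j * x - (k:ℝ))| * x^2 ≤ ((T+1)*cψ/x^2) * x^2 :=
            mul_le_mul_of_nonneg_right hfin hx2pos.le
        _ = (T+1)*cψ := by rw [div_mul_cancel₀ _ hx2pos.ne']
    nlinarith [abs_nonneg (∑ k ∈ m, ψ (2^j * x - (k:ℝ))), hA, hxx, hcψ, hT,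
      mul_nonneg (sub_nonneg.mpr hxx) (abs_nonneg (∑ k ∈ m, ψ (2^j * x - (k:ℝ))))]
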